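/- Let Z(α) = β₁ log U₁(ℓ₁(α)) + β₂ log U₂(ℓ₂(α)) where β₁, β₂ > 0, Uᵢ are sigmoidal utilities with parameters aᵢ, bᵢ > 0, and ℓᵢ(α) are affine functions of α with nonnegative values on [0,1]. Then Z is concave on [0,1]. -/

import Mathlib

lemma softplus_convex : ConvexOn ℝ Set.univ (fun x : ℝ => Real.log (1 + Real.exp x)) := by
  have hpos : ∀ x : ℝ, 0 < 1 + Real.exp x := fun x => by positivity
  refine convexOn_of_hasDerivWithinAt2_nonneg convex_univ
    (f' := fun x => Real.exp x / (1 + Real.exp x))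
    (f'' := fun x => (Real.exp x * (1 + Real.exp x) - Real.exp x * Real.exp x) / (1 + Real.exp x)^2)
    ?_ ?_ ?_ ?_
  · exact ((continuous_const.add Real.continuous_exp).log (fun x => (hpos x).ne')).continuousOn
  · intro x _
    exact (((Real.hasDerivAt_exp x).const_add 1).log (hpos x).ne').hasDerivWithinAt
  · intro x _
    exact ((Real.hasDerivAt_exp x).div ((Real.hasDerivAt_exp x).const_add 1)
      (hpos x).ne').hasDerivWithinAt
  · intro x _
    have h : Real.exp x * (1 + Real.exp x) - Real.exp x * Real.exp x = Real.exp x := by ring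
    show 0 ≤ (Real.exp x * (1 + Real.exp x) - Real.exp x * Real.exp x) / (1 + Real.exp x)^2
    rw [h]
    positivity

lemma softplus_aff_convex (A B : ℝ) :
    ConvexOn ℝ Set.univ (fun α : ℝ => Real.log (1 + Real.exp (A*α + B))) := by
  refine ⟨convex_univ, fun x _ y _ a b ha hb hab => ?_⟩
  have h := softplus_convex.2 (Set.mem_univ (A*x+B)) (Set.mem_univ (A*y+B)) ha hb hab
  simp only [smul_eq_mul] at h ⊢
  have hE : A*(a*x + b*y) + B = a*(A*x+B) + b*(A*y+B) := by linear_combination B * hab.symm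
  rw [hE]
  exact h

-- key algebraic identity
lemma U_eq (a b l : ℝ) :
    1 - ((1 + Real.exp (a*b)) / Real.exp (a*b)) *
      (1 / (1 + Real.exp (-a*(l-b))) - 1 / (1 + Real.exp (a*b))) =
    (1 + Real.exp (a*b)) / (Real.exp (a*b) * (1 + Real.exp (a*(l-b)))) := by
  have ht : Real.exp (-a*(l-b)) = (Real.exp (a*(l-b)))⁻¹ := by
    rw [← Real.exp_neg]; ring_nf
  rw [ht]
  have h1 : (0:ℝ) < Real.exp (a*b) := Real.exp_pos _
  have h2 : (0:ℝ) < Real.exp (a*(l-b)) := Real.exp_pos _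
  have h3 : (0:ℝ) < 1 + Real.exp (a*b) := by positivity
  have h4 : (0:ℝ) < 1 + Real.exp (a*(l-b)) := by positivity
  have h5 : (0:ℝ) < 1 + (Real.exp (a*(l-b)))⁻¹ := by positivity
  field_simp
  ring

theorem stmt_9 (a₁ b₁ β₁ a₂ b₂ β₂ l₁₁ l₁₂ l₂₁ l₂₂ : ℝ)
    (ha₁ : 0 < a₁) (hb₁ : 0 < b₁) (hβ₁ : 0 < β₁)
    (ha₂ : 0 < a₂) (hb₂ : 0 < b₂) (hβ₂ : 0 < β₂)
    (h11 : 0 ≤ l₁₁) (h12 : 0 ≤ l₁₂) (h21 : 0 ≤ l₂₁) (h22 : 0 ≤ l₂₂)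
    (c₁ d₁ c₂ d₂ : ℝ)
    (hc₁ : c₁ = (1 + Real.exp (a₁*b₁)) / Real.exp (a₁*b₁))
    (hd₁ : d₁ = 1 / (1 + Real.exp (a₁*b₁)))
    (hc₂ : c₂ = (1 + Real.exp (a₂*b₂)) / Real.exp (a₂*b₂))
    (hd₂ : d₂ = 1 / (1 + Real.exp (a₂*b₂)))
    (U₁ U₂ : ℝ → ℝ)
    (hU₁ : ∀ l, U₁ l = 1 - c₁ * (1 / (1 + Real.exp (-a₁*(l-b₁))) - d₁))
    (hU₂ : ∀ l, U₂ l = 1 - c₂ * (1 / (1 + Real.exp (-a₂*(l-b₂))) - d₂))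
    (Z : ℝ → ℝ)
    (hZ : ∀ α, Z α = β₁ * Real.log (U₁ (α * l₁₁ + (1-α) * l₁₂)) +
                     β₂ * Real.log (U₂ ((1-α) * l₂₁ + α * l₂₂))) :
    ConcaveOn ℝ (Set.Icc 0 1) Z := by
  set s₁ := Real.exp (a₁*b₁) with hs₁
  set s₂ := Real.exp (a₂*b₂) with hs₂
  have hs₁p : (0:ℝ) < s₁ := Real.exp_pos _
  have hs₂p : (0:ℝ) < s₂ := Real.exp_pos _
  set A₁ := a₁*(l₁₁ - l₁₂) with hA₁
  set B₁ := a₁*(l₁₂ - b₁) with hB₁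
  set A₂ := a₂*(l₂₂ - l₂₁) with hA₂
  set B₂ := a₂*(l₂₁ - b₂) with hB₂
  set C : ℝ := β₁ * (Real.log (1+s₁) - Real.log s₁) + β₂ * (Real.log (1+s₂) - Real.log s₂) with hC
  have hZeq : Z = fun α => C +
      (-(β₁ • (fun α : ℝ => Real.log (1 + Real.exp (A₁*α + B₁))) α +
         β₂ • (fun α : ℝ => Real.log (1 + Real.exp (A₂*α + B₂))) α)) := by
    funext α
    have e₁ : a₁*((α * l₁₁ + (1-α) * l₁₂) - b₁) = A₁*α + B₁ := by rw [hA₁, hB₁]; ring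
    have e₂ : a₂*(((1-α) * l₂₁ + α * l₂₂) - b₂) = A₂*α + B₂ := by rw [hA₂, hB₂]; ring
    have u₁ : U₁ (α * l₁₁ + (1-α) * l₁₂) = (1+s₁) / (s₁ * (1 + Real.exp (A₁*α + B₁))) := by
      rw [hU₁, hc₁, hd₁, U_eq a₁ b₁ _, e₁]
    have u₂ : U₂ ((1-α) * l₂₁ + α * l₂₂) = (1+s₂) / (s₂ * (1 + Real.exp (A₂*α + B₂))) := by
      rw [hU₂, hc₂, hd₂, U_eq a₂ b₂ _, e₂]
    have p₁ : (0:ℝ) < 1 + Real.exp (A₁*α + B₁) := by positivity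
    have p₂ : (0:ℝ) < 1 + Real.exp (A₂*α + B₂) := by positivity
    have lg₁ : Real.log (U₁ (α * l₁₁ + (1-α) * l₁₂)) =
        Real.log (1+s₁) - Real.log s₁ - Real.log (1 + Real.exp (A₁*α + B₁)) := by
      rw [u₁, Real.log_div (by positivity) (by positivity),
        Real.log_mul hs₁p.ne' p₁.ne']
      ring
    have lg₂ : Real.log (U₂ ((1-α) * l₂₁ + α * l₂₂)) =
        Real.log (1+s₂) - Real.log s₂ - Real.log (1 + Real.exp (A₂*α + B₂)) := by
      rw [u₂, Real.log_div (by positivity) (by positivity),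
        Real.log_mul hs₂p.ne' p₂.ne']
      ring
    rw [hZ, lg₁, lg₂]
    simp only [smul_eq_mul, hC]
    ring
  rw [hZeq]
  have hconv : ConvexOn ℝ Set.univ
      (β₁ • (fun α : ℝ => Real.log (1 + Real.exp (A₁*α + B₁))) +
       β₂ • (fun α : ℝ => Real.log (1 + Real.exp (A₂*α + B₂)))) :=
    ((softplus_aff_convex A₁ B₁).smul hβ₁.le).add ((softplus_aff_convex A₂ B₂).smul hβ₂.le)
  have hconc : ConcaveOn ℝ Set.univ
      (fun α : ℝ => C +
      (-(β₁ • (fun α : ℝ => Real.log (1 + Real.exp (A₁*α + B₁))) α +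
         β₂ • (fun α : ℝ => Real.log (1 + Real.exp (A₂*α + B₂))) α))) := by
    have := (hconv.neg.add_const C)
    refine this.congr ?_
    intro α _
    simp only [Pi.add_apply, Pi.neg_apply, Pi.smul_apply, smul_eq_mul]
    ring
  exact hconc.subset (Set.subset_univ _) (convex_Icc 0 1)
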